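/- Let G be a finite abelian group, S ⊆ G \ {0} a symmetric set with S ≠ ∅, let H₁ be a connected graph containing at least one cycle (i.e. e(H₁) ≥ v(H₁)), and let H be the standard subdivision of H₁. Let f = 1_S be the indicator function of S. If there exist ε ∈ (0,1] and a nontrivial character χ of G with |f̂(χ)| ≥ ε·f̂(0), then t(H, Cay(G,S)) ≥ t(K₂, Cay(G,S))^{e(H)} · (1 + ε^{e(H)}). -/

import Mathlib

open Finset

/-- The Cayley graph of a finite abelian group `G` w.r.t. a symmetric set `S` avoiding `0`. -/
def cayley {G : Type*} [AddCommGroup G] (S : Finset G) (h0 : (0 : G) ∉ S)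
    (hsymm : ∀ s ∈ S, -s ∈ S) : SimpleGraph G where
  Adj x y := x - y ∈ S
  symm := by
    constructor
    intro x y h
    simpa [neg_sub] using hsymm _ h
  loopless := by
    constructor
    intro x h
    exact h0 (by simpa using h)

/-- The homomorphism density `t(H, Γ)`. -/
noncomputable def homDensity {α β : Type*} (H : SimpleGraph α) (Γ : SimpleGraph β) : ℝ :=
  (Nat.card {f : α → β // ∀ ⦃u v⦄, H.Adj u v → Γ.Adj (f u) (f v)} : ℝ) /
    (Nat.card β : ℝ) ^ (Nat.card α)

/-- The standard subdivision of a graph: replace each edge by a path of length 2. -/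
def standardSubdivision {V : Type*} (H : SimpleGraph V) : SimpleGraph (V ⊕ H.edgeSet) where
  Adj x y :=
    match x, y with
    | Sum.inl v, Sum.inr e => v ∈ (e : Sym2 V)
    | Sum.inr e, Sum.inl v => v ∈ (e : Sym2 V)
    | _, _ => False
  symm := by constructor; rintro (v | e) (w | f) h <;> simp_all
  loopless := by constructor; rintro (v | e) h <;> simp_all

/-- Fourier coefficient of `f : G → ℂ` at the character `χ`. -/
noncomputable def fourCoeff {G : Type*} [AddCommGroup G] [Fintype G] (f : G → ℂ)
    (χ : AddChar G ℂ) : ℂ :=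
  (∑ x : G, f x * (starRingEnd ℂ) (χ x)) / (Fintype.card G : ℂ)

section Aux

open scoped Classical

lemma aux_telescope {V G : Type*} [AddCommGroup G] {H : SimpleGraph V} {u v : V}
    (p : H.Walk u v) (f : V → G) :
    (p.darts.map fun d => f d.toProd.1 - f d.toProd.2).sum = f u - f v := by
  induction p with
  | nil => simp
  | cons h q ih => simp [ih, SimpleGraph.Walk.darts_cons]

lemma aux_char_list_sum {G : Type*} [AddCommGroup G] (χ : AddChar G ℂ) (l : List G) :
    χ l.sum = (l.map χ).prod := by
  induction l with
  | nil => simp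
  | cons a l ih => simp [AddChar.map_add_eq_mul, ih]

lemma aux_sym2_mk_out {V : Type*} (s : Sym2 V) : Sym2.mk s.out.1 s.out.2 = s := by
  rw [Sym2.mk]; exact s.out_eq

lemma aux_mem_out_cases {V : Type*} {v : V} {s : Sym2 V} (h : v ∈ s) :
    v = s.out.1 ∨ v = s.out.2 := by
  rw [← aux_sym2_mk_out s, ← Prod.mk.eta (p := s.out), Sym2.mem_iff] at h
  exact h

lemma aux_out_ne {V : Type*} {H : SimpleGraph V} (e : H.edgeSet) :
    (e : Sym2 V).out.1 ≠ (e : Sym2 V).out.2 := by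
  intro h
  have hd : ¬ (e : Sym2 V).IsDiag := H.not_isDiag_of_mem_edgeSet e.2
  apply hd
  rw [← aux_sym2_mk_out (e : Sym2 V), ← Prod.mk.eta (p := (e : Sym2 V).out),
    Sym2.mk_isDiag_iff]
  exact h

lemma aux_card_subdivision_edgeSet {V : Type*} (H : SimpleGraph V) :
    Nat.card (standardSubdivision H).edgeSet = 2 * Nat.card H.edgeSet := by
  have hΦmem : ∀ (p : H.edgeSet × Bool),
      s(Sum.inl (if p.2 then (p.1 : Sym2 V).out.1 else (p.1 : Sym2 V).out.2),
        (Sum.inr p.1 : V ⊕ H.edgeSet)) ∈ (standardSubdivision H).edgeSet := by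
    rintro ⟨e, b⟩
    rw [SimpleGraph.mem_edgeSet]
    show (if b then (e : Sym2 V).out.1 else (e : Sym2 V).out.2) ∈ (e : Sym2 V)
    cases b
    · simpa using Sym2.out_snd_mem (e : Sym2 V)
    · simpa using Sym2.out_fst_mem (e : Sym2 V)
  set Φ : H.edgeSet × Bool → (standardSubdivision H).edgeSet :=
    fun p => ⟨_, hΦmem p⟩ with hΦ
  have hinj : Function.Injective Φ := by
    rintro ⟨e, b⟩ ⟨e', b'⟩ h
    rw [hΦ, Subtype.mk.injEq, Sym2.eq_iff] at h
    rcases h with ⟨h1, h2⟩ | ⟨h1, h2⟩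
    · obtain rfl : e = e' := by simpa using h2
      cases b <;> cases b' <;> simp_all
      · exact absurd h1.symm (aux_out_ne e)
      · exact absurd h1 (aux_out_ne e)
    · simp at h1
  have hsurj : Function.Surjective Φ := by
    rintro ⟨s, hs⟩
    induction s with
    | _ x y =>
      rw [SimpleGraph.mem_edgeSet] at hs
      match x, y, hs with
      | Sum.inl v, Sum.inr e, hs =>
        have hv : v ∈ (e : Sym2 V) := hs
        rcases aux_mem_out_cases hv with h | h
        · exact ⟨(e, true), by simp [hΦ, ← h]⟩
        · exact ⟨(e, false), by simp [hΦ, ← h]⟩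
      | Sum.inr e, Sum.inl v, hs =>
        have hv : v ∈ (e : Sym2 V) := hs
        rcases aux_mem_out_cases hv with h | h
        · exact ⟨(e, true), by simp only [hΦ, Subtype.mk.injEq, ← h]; exact Sym2.eq_swap⟩
        · exact ⟨(e, false), by simp only [hΦ, Subtype.mk.injEq, ← h]; exact Sym2.eq_swap⟩
  have := Nat.card_congr (Equiv.ofBijective Φ ⟨hinj, hsurj⟩)
  rw [← this, Nat.card_prod]
  simp [mul_comm]

/-- Step B: Fourier expansion of the codegree count. -/
lemma aux_fourier_count {G : Type*} [AddCommGroup G] [Fintype G] (S : Finset G) (d : G) :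
    ∑ ψ : AddChar G ℂ, (Complex.normSq (∑ x ∈ S, ψ x) : ℂ) * ψ d
      = (Fintype.card G : ℂ) * ((S.filter fun x => x + d ∈ S).card : ℂ) := by
  have h1 : ∀ ψ : AddChar G ℂ, (Complex.normSq (∑ x ∈ S, ψ x) : ℂ) * ψ d
      = ∑ x ∈ S, ∑ y ∈ S, ψ (x + -y + d) := by
    intro ψ
    rw [← Complex.mul_conj]
    have hconj : (starRingEnd ℂ) (∑ x ∈ S, ψ x) = ∑ y ∈ S, ψ (-y) := by
      rw [map_sum]
      exact Finset.sum_congr rfl fun y _ => (AddChar.map_neg_eq_conj ψ y).symm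
    rw [hconj, Finset.sum_mul, Finset.sum_mul]
    refine Finset.sum_congr rfl fun x _ => ?_
    rw [Finset.mul_sum, Finset.sum_mul]
    refine Finset.sum_congr rfl fun y _ => ?_
    rw [AddChar.map_add_eq_mul, AddChar.map_add_eq_mul]
  rw [Finset.sum_congr rfl fun ψ _ => h1 ψ]
  rw [Finset.sum_comm]
  have h2 : ∀ x ∈ S, ∑ y ∈ S, ∑ ψ : AddChar G ℂ, ψ (x + -y + d)
      = if x + d ∈ S then (Fintype.card G : ℂ) else 0 := by
    intro x _
    have h3 : ∀ y ∈ S, ∑ ψ : AddChar G ℂ, ψ (x + -y + d)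
        = if y = x + d then (Fintype.card G : ℂ) else 0 := by
      intro y _
      rw [AddChar.sum_apply_eq_ite]
      congr 1
      simp only [eq_iff_iff]
      constructor
      · intro h
        have h' : x + d - y = 0 := by rw [← h]; abel
        exact (eq_of_sub_eq_zero h').symm
      · intro h; rw [h]; abel
    rw [Finset.sum_congr rfl h3, Finset.sum_ite_eq' S (x + d) (fun _ => (Fintype.card G : ℂ))]
  have h4 : ∀ x ∈ S, ∑ ψ : AddChar G ℂ, ∑ y ∈ S, ψ (x + -y + d)
      = if x + d ∈ S then (Fintype.card G : ℂ) else 0 := by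
    intro x hx
    rw [Finset.sum_comm]
    exact h2 x hx
  rw [Finset.sum_congr rfl h4, ← Finset.sum_filter, Finset.sum_const, nsmul_eq_mul, mul_comm]

end Aux
section Aux2
open scoped Classical

/-- Step A: counting homomorphisms from the subdivision. -/
lemma aux_card_homs {G V₁ : Type*} [AddCommGroup G] [Fintype G] [Fintype V₁]
    (S : Finset G) (h0 : (0 : G) ∉ S) (hsymm : ∀ s ∈ S, -s ∈ S)
    (H₁ : SimpleGraph V₁) (D : Sym2 V₁ → V₁ × V₁) (hD1 : ∀ s, Sym2.mk (D s).1 (D s).2 = s) :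
    Nat.card {F : V₁ ⊕ H₁.edgeSet → G // ∀ ⦃u v⦄, (standardSubdivision H₁).Adj u v →
        (cayley S h0 hsymm).Adj (F u) (F v)} =
      ∑ f : V₁ → G, ∏ e : H₁.edgeSet,
        (univ.filter fun z : G =>
          f (D (e : Sym2 V₁)).1 - z ∈ S ∧ f (D (e : Sym2 V₁)).2 - z ∈ S).card := by
  have hmem1 : ∀ s : Sym2 V₁, (D s).1 ∈ s := fun s => by
    have h : (D s).1 ∈ Sym2.mk (D s).1 (D s).2 := Sym2.mem_mk_left (D s).1 (D s).2
    rwa [hD1 s] at h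
  have hmem2 : ∀ s : Sym2 V₁, (D s).2 ∈ s := fun s => by
    have h : (D s).2 ∈ Sym2.mk (D s).1 (D s).2 := Sym2.mem_mk_right (D s).1 (D s).2
    rwa [hD1 s] at h
  let P : (V₁ → G) → H₁.edgeSet → G → Prop := fun f e z =>
    f (D (e : Sym2 V₁)).1 - z ∈ S ∧ f (D (e : Sym2 V₁)).2 - z ∈ S
  let myEquiv : {F : V₁ ⊕ H₁.edgeSet → G // ∀ ⦃u v⦄, (standardSubdivision H₁).Adj u v →
        (cayley S h0 hsymm).Adj (F u) (F v)} ≃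
      Σ f : V₁ → G, ∀ e : H₁.edgeSet, {z : G // P f e z} :=
    { toFun := fun F => ⟨fun v => F.1 (Sum.inl v), fun e =>
        ⟨F.1 (Sum.inr e), F.2 (hmem1 (e : Sym2 V₁)), F.2 (hmem2 (e : Sym2 V₁))⟩⟩
      invFun := fun p => ⟨Sum.elim p.1 (fun e => (p.2 e).1), by
        rintro (a | a) (b | b) hadj
        · exact hadj.elim
        · have : a ∈ (b : Sym2 V₁) := hadj
          rw [← hD1 (b : Sym2 V₁), ← Prod.mk.eta (p := D (b : Sym2 V₁)), Sym2.mem_iff] at this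
          rcases this with h | h
          · rw [h]; exact (p.2 b).2.1
          · rw [h]; exact (p.2 b).2.2
        · have : b ∈ (a : Sym2 V₁) := hadj
          rw [← hD1 (a : Sym2 V₁), ← Prod.mk.eta (p := D (a : Sym2 V₁)), Sym2.mem_iff] at this
          rcases this with h | h
          · rw [h]; exact ((cayley S h0 hsymm).adj_symm (p.2 a).2.1)
          · rw [h]; exact ((cayley S h0 hsymm).adj_symm (p.2 a).2.2)
        · exact hadj.elim⟩
      left_inv := fun F => Subtype.ext (funext fun x => by cases x <;> rfl)
      right_inv := fun p => rfl }
  rw [Nat.card_congr myEquiv, Nat.card_eq_fintype_card, Fintype.card_sigma]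
  refine Finset.sum_congr rfl fun f _ => ?_
  rw [Fintype.card_pi]
  refine Finset.prod_congr rfl fun e _ => ?_
  rw [Fintype.card_subtype]

end Aux2

set_option maxHeartbeats 1000000 in
open scoped Classical in
/-- If `f = 1_S` has a nontrivial Fourier coefficient of size at least `ε·f̂(0)`, then for
the standard subdivision `H` of a connected graph `H₁` containing a cycle, the Sidorenko
inequality in `Cay(G,S)` is strict: `t(H) ≥ t(K₂)^{e(H)} · (1 + ε^{e(H)})`. -/
theorem sidorenko_strict_of_large_fourier_coeff
    {G V₁ : Type*} [AddCommGroup G] [Fintype G] [Fintype V₁]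
    (S : Finset G) (h0 : (0 : G) ∉ S) (hsymm : ∀ s ∈ S, -s ∈ S) (hSne : S.Nonempty)
    (H₁ : SimpleGraph V₁) (hconn : H₁.Connected)
    (hcyc : Fintype.card V₁ ≤ Nat.card H₁.edgeSet)
    (ε : ℝ) (hε0 : 0 < ε) (hε1 : ε ≤ 1)
    (χ : AddChar G ℂ) (hχ : χ ≠ 1)
    (hlarge : ε * ((S.card : ℝ) / (Fintype.card G : ℝ)) ≤
      ‖fourCoeff (fun x => if x ∈ S then (1 : ℂ) else 0) χ‖) :
    homDensity (standardSubdivision H₁) (cayley S h0 hsymm) ≥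
      ((S.card : ℝ) / (Fintype.card G : ℝ)) ^ (Nat.card (standardSubdivision H₁).edgeSet) *
        (1 + ε ^ (Nat.card (standardSubdivision H₁).edgeSet)) := by
  -- notation
  set n := Fintype.card G with hn_def
  have hn : 0 < n := Fintype.card_pos
  have hn' : (0 : ℝ) < (n : ℝ) := by exact_mod_cast hn
  set q : ℝ := (S.card : ℝ) with hq_def
  have hq : 0 < q := by
    rw [hq_def]; exact_mod_cast Finset.card_pos.mpr hSne
  set e₁ := Fintype.card H₁.edgeSet with he₁_def
  set v₁ := Fintype.card V₁ with hv₁_def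
  -- find a cycle
  have hnA : ¬ H₁.IsAcyclic := by
    intro hA
    have ht : H₁.IsTree := ⟨hconn, hA⟩
    have h1 := ht.card_edgeFinset
    have h2 : Nat.card H₁.edgeSet = H₁.edgeFinset.card := by
      rw [Nat.card_eq_fintype_card, SimpleGraph.edgeFinset_card]
    omega
  unfold SimpleGraph.IsAcyclic at hnA
  push_neg at hnA
  obtain ⟨v₀, cw, hcw⟩ := hnA
  have hnodup : cw.edges.Nodup := hcw.isTrail.edges_nodup
  have hedne : cw.edges ≠ [] := by
    have h3 := hcw.three_le_length
    have h4 : cw.edges.length = cw.length := SimpleGraph.Walk.length_edges cw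
    intro h
    rw [h] at h4
    simp only [List.length_nil] at h4
    omega
  -- orientation choice, compatible with the cycle
  set D : Sym2 V₁ → V₁ × V₁ := fun s =>
    if h : ∃ d ∈ cw.darts, d.edge = s then h.choose.toProd else s.out with hD_def
  have hD1 : ∀ s, Sym2.mk (D s).1 (D s).2 = s := by
    intro s
    rw [hD_def]
    by_cases h : ∃ d ∈ cw.darts, d.edge = s
    · simp only [dif_pos h]
      have h2 := h.choose_spec.2
      have h3 : Sym2.mk h.choose.toProd.1 h.choose.toProd.2 = h.choose.edge := rfl
      rw [h3]
      exact h2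
    · simp only [dif_neg h]
      exact aux_sym2_mk_out s
  have hD2 : ∀ d ∈ cw.darts, D d.edge = d.toProd := by
    intro d hd
    have hex : ∃ d' ∈ cw.darts, d'.edge = d.edge := ⟨d, hd, rfl⟩
    rw [hD_def]
    simp only [dif_pos hex]
    have h1 := hex.choose_spec.1
    have h2 := hex.choose_spec.2
    have hnd : (cw.darts.map SimpleGraph.Dart.edge).Nodup := hnodup
    have heq : hex.choose = d := List.inj_on_of_nodup_map hnd h1 hd h2
    rw [heq]
  -- the codegree count
  set C : G → ℕ := fun d => (S.filter fun x => x + d ∈ S).card with hC_def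
  have hcount : ∀ a b : G,
      (univ.filter fun z : G => a - z ∈ S ∧ b - z ∈ S).card = C (a - b) := by
    intro a b
    simp only [hC_def]
    apply Finset.card_bij' (fun z _ => b - z) (fun x _ => b - x)
    · intro z hz
      simp only [Finset.mem_filter, Finset.mem_univ, true_and] at hz
      simp only [Finset.mem_filter]
      refine ⟨hz.2, ?_⟩
      have h : b - z + (a - b) = a - z := by abel
      rw [h]; exact hz.1
    · intro x hx
      simp only [Finset.mem_filter] at hx
      simp only [Finset.mem_filter, Finset.mem_univ, true_and]
      constructor
      · have h : a - (b - x) = x + (a - b) := by abel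
        rw [h]; exact hx.2
      · have h : b - (b - x) = x := by abel
        rw [h]; exact hx.1
    · intro z _; abel
    · intro x _; abel
  -- Fourier data
  set T : AddChar G ℂ → ℂ := fun ψ => ∑ x ∈ S, ψ x with hT_def
  set b : AddChar G ℂ → ℝ := fun ψ => Complex.normSq (T ψ) with hb_def
  set Δ : Sym2 V₁ → (V₁ → G) → G := fun s f => f (D s).1 - f (D s).2 with hΔ_def
  have hB : ∀ d : G, ((n : ℂ)) * (C d : ℂ) = ∑ ψ : AddChar G ℂ, (b ψ : ℂ) * ψ d := by
    intro d
    simp only [hb_def, hT_def, hC_def]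
    exact (aux_fourier_count S d).symm
  have hΔadd : ∀ s (f g : V₁ → G), Δ s (f + g) = Δ s f + Δ s g := by
    intro s f g; simp only [hΔ_def, Pi.add_apply]; abel
  set Φ : (H₁.edgeSet → AddChar G ℂ) → AddChar (V₁ → G) ℂ := fun w =>
    { toFun := fun f => ∏ e : H₁.edgeSet, w e (Δ (e : Sym2 V₁) f)
      map_zero_eq_one' := by
        simp [hΔ_def]
      map_add_eq_mul' := by
        intro f g
        rw [← Finset.prod_mul_distrib]
        refine Finset.prod_congr rfl fun e _ => ?_
        rw [hΔadd, AddChar.map_add_eq_mul] } with hΦ_def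
  set t : (H₁.edgeSet → AddChar G ℂ) → ℝ := fun w =>
    (∏ e : H₁.edgeSet, b (w e)) * (if Φ w = 0 then (n : ℝ) ^ v₁ else 0) with ht_def
  -- the homomorphism count
  have hA : (Nat.card {F : V₁ ⊕ H₁.edgeSet → G // ∀ ⦃u v⦄, (standardSubdivision H₁).Adj u v →
        (cayley S h0 hsymm).Adj (F u) (F v)} : ℕ)
      = ∑ f : V₁ → G, ∏ e : H₁.edgeSet, C (Δ (e : Sym2 V₁) f) := by
    rw [aux_card_homs S h0 hsymm H₁ D hD1]
    refine Finset.sum_congr rfl fun f _ => Finset.prod_congr rfl fun e _ => ?_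
    rw [hcount, hΔ_def]
  set cnt : ℕ := Nat.card {F : V₁ ⊕ H₁.edgeSet → G // ∀ ⦃u v⦄, (standardSubdivision H₁).Adj u v →
        (cayley S h0 hsymm).Adj (F u) (F v)} with hcnt_def
  -- the grand Fourier identity
  have hKey : (cnt : ℂ) * (n : ℂ) ^ e₁ = ∑ w : H₁.edgeSet → AddChar G ℂ, ((t w : ℝ) : ℂ) := by
    calc (cnt : ℂ) * (n : ℂ) ^ e₁
        = ∑ f : V₁ → G, ∏ e : H₁.edgeSet, ((n : ℂ) * (C (Δ (e : Sym2 V₁) f) : ℂ)) := by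
          rw [hA]
          push_cast
          rw [Finset.sum_mul]
          refine Finset.sum_congr rfl fun f _ => ?_
          rw [Finset.prod_mul_distrib, Finset.prod_const, Finset.card_univ, mul_comm, ← he₁_def]
      _ = ∑ f : V₁ → G, ∏ e : H₁.edgeSet,
            (∑ ψ : AddChar G ℂ, (b ψ : ℂ) * ψ (Δ (e : Sym2 V₁) f)) := by
          refine Finset.sum_congr rfl fun f _ => Finset.prod_congr rfl fun e _ => ?_
          exact hB _
      _ = ∑ f : V₁ → G, ∑ w : H₁.edgeSet → AddChar G ℂ,
            ∏ e : H₁.edgeSet, ((b (w e) : ℂ) * (w e) (Δ (e : Sym2 V₁) f)) := by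
          refine Finset.sum_congr rfl fun f _ => ?_
          exact Fintype.prod_sum
            (fun (e : H₁.edgeSet) (ψ : AddChar G ℂ) => (b ψ : ℂ) * ψ (Δ (e : Sym2 V₁) f))
      _ = ∑ w : H₁.edgeSet → AddChar G ℂ, ∑ f : V₁ → G,
            ∏ e : H₁.edgeSet, ((b (w e) : ℂ) * (w e) (Δ (e : Sym2 V₁) f)) := by
          rw [Finset.sum_comm]
      _ = ∑ w : H₁.edgeSet → AddChar G ℂ,
            (∏ e : H₁.edgeSet, (b (w e) : ℂ)) * (∑ f : V₁ → G, Φ w f) := by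
          refine Finset.sum_congr rfl fun w _ => ?_
          have hstep : ∀ f : V₁ → G,
              (∏ e : H₁.edgeSet, ((b (w e) : ℂ) * (w e) (Δ (e : Sym2 V₁) f)))
                = (∏ e : H₁.edgeSet, (b (w e) : ℂ)) * Φ w f := by
            intro f
            rw [Finset.prod_mul_distrib]
            rfl
          rw [Finset.sum_congr rfl fun f _ => hstep f, ← Finset.mul_sum]
      _ = ∑ w : H₁.edgeSet → AddChar G ℂ, ((t w : ℝ) : ℂ) := by
          refine Finset.sum_congr rfl fun w _ => ?_
          rw [AddChar.sum_eq_ite (Φ w)]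
          simp only [ht_def]
          have hcard : Fintype.card (V₁ → G) = n ^ v₁ := by
            rw [Fintype.card_fun, hn_def, hv₁_def]
          split_ifs with h
          · rw [hcard]; push_cast; ring
          · push_cast; ring
  have hReal : (cnt : ℝ) * (n : ℝ) ^ e₁ = ∑ w : H₁.edgeSet → AddChar G ℂ, t w := by
    have h2 : (((cnt : ℝ) * (n : ℝ) ^ e₁ : ℝ) : ℂ)
        = ((∑ w : H₁.edgeSet → AddChar G ℂ, t w : ℝ) : ℂ) := by
      push_cast
      exact hKey
    exact_mod_cast h2
  -- nonnegativity
  have htnn : ∀ w, 0 ≤ t w := by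
    intro w
    simp only [ht_def]
    apply mul_nonneg
    · exact Finset.prod_nonneg fun e _ => Complex.normSq_nonneg _
    · split_ifs
      · exact pow_nonneg hn'.le _
      · exact le_rfl
  -- the two special terms
  have hΦ1 : Φ (fun _ => (1 : AddChar G ℂ)) = 0 := by
    apply DFunLike.ext
    intro f
    show (∏ _e : H₁.edgeSet, (1 : AddChar G ℂ) (Δ _ f)) = 1
    simp
  set w₀ : H₁.edgeSet → AddChar G ℂ :=
    fun e => if (e : Sym2 V₁) ∈ cw.edges then χ else 1 with hw₀_def
  have hΦ0 : Φ w₀ = 0 := by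
    apply DFunLike.ext
    intro f
    show (∏ e : H₁.edgeSet, (w₀ e) (Δ (e : Sym2 V₁) f)) = 1
    have step1 : ∀ e : H₁.edgeSet, (w₀ e) (Δ (e : Sym2 V₁) f)
        = (if (e : Sym2 V₁) ∈ cw.edges then χ (Δ (e : Sym2 V₁) f) else 1) := by
      intro e
      simp only [hw₀_def]
      by_cases h : (e : Sym2 V₁) ∈ cw.edges <;> simp [h]
    calc (∏ e : H₁.edgeSet, (w₀ e) (Δ (e : Sym2 V₁) f))
        = ∏ e : H₁.edgeSet,
            (if (e : Sym2 V₁) ∈ cw.edges then χ (Δ (e : Sym2 V₁) f) else 1) :=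
          Finset.prod_congr rfl fun e _ => step1 e
      _ = ∏ e ∈ Finset.univ.filter (fun e : H₁.edgeSet => (e : Sym2 V₁) ∈ cw.edges),
            χ (Δ (e : Sym2 V₁) f) := (Finset.prod_filter _ _).symm
      _ = ∏ s ∈ cw.edges.toFinset, χ (Δ s f) := by
          refine Finset.prod_bij (fun e _ => (e : Sym2 V₁)) ?_ ?_ ?_ ?_
          · intro a ha; rw [List.mem_toFinset]; exact (Finset.mem_filter.mp ha).2
          · intro a _ a' _ h; exact Subtype.ext h
          · intro s hs
            refine ⟨⟨s, cw.edges_subset_edgeSet (List.mem_toFinset.mp hs)⟩, ?_, rfl⟩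
            rw [Finset.mem_filter]
            exact ⟨Finset.mem_univ _, List.mem_toFinset.mp hs⟩
          · intro a _; rfl
      _ = (cw.edges.map (fun s => χ (Δ s f))).prod := List.prod_toFinset _ hnodup
      _ = (cw.darts.map (fun d => χ (f d.toProd.1 - f d.toProd.2))).prod := by
          show ((cw.darts.map SimpleGraph.Dart.edge).map (fun s => χ (Δ s f))).prod = _
          rw [List.map_map]
          congr 1
          refine List.map_congr_left fun d hd => ?_
          show χ (Δ d.edge f) = χ (f d.toProd.1 - f d.toProd.2)
          have : Δ d.edge f = f (D d.edge).1 - f (D d.edge).2 := rfl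
          rw [this, hD2 d hd]
      _ = χ ((cw.darts.map (fun d => f d.toProd.1 - f d.toProd.2)).sum) := by
          rw [aux_char_list_sum, List.map_map]
          rfl
      _ = χ (f v₀ - f v₀) := by rw [aux_telescope]
      _ = 1 := by rw [sub_self, AddChar.map_zero_eq_one]
  -- values of b
  have hbone : b 1 = q ^ 2 := by
    simp only [hb_def, hT_def, AddChar.one_apply, Finset.sum_const, nsmul_eq_mul, mul_one]
    rw [Complex.normSq_natCast, hq_def]
    push_cast
    ring
  have habsT : ε * q ≤ ‖T χ‖ := by
    have hfc : fourCoeff (fun x => if x ∈ S then (1 : ℂ) else 0) χ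
        = (∑ x ∈ S, (starRingEnd ℂ) (χ x)) / (n : ℂ) := by
      rw [fourCoeff]
      congr 1
      simp only [ite_mul, one_mul, zero_mul]
      rw [← Finset.sum_filter, Finset.filter_univ_mem]
    have habs1 : ‖∑ x ∈ S, (starRingEnd ℂ) (χ x)‖ = ‖T χ‖ := by
      simp only [hT_def]
      rw [← map_sum, Complex.norm_conj]
    rw [hfc, norm_div, habs1] at hlarge
    have hnabs : ‖((n : ℂ))‖ = (n : ℝ) := by simp
    rw [hnabs] at hlarge
    have h3 := mul_le_mul_of_nonneg_right hlarge hn'.le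
    calc ε * q = ε * (q / (n : ℝ)) * (n : ℝ) := by field_simp
      _ ≤ ‖T χ‖ / (n : ℝ) * (n : ℝ) := h3
      _ = ‖T χ‖ := by field_simp
  have hbχ : ε ^ 2 * q ^ 2 ≤ b χ := by
    have hb2 : b χ = ‖T χ‖ ^ 2 := by
      simp only [hb_def]
      rw [← Complex.sq_norm]
    rw [hb2]
    have h1 : 0 ≤ ε * q := mul_nonneg hε0.le hq.le
    calc ε ^ 2 * q ^ 2 = (ε * q) ^ 2 := by ring
      _ ≤ ‖T χ‖ ^ 2 := by
          apply pow_le_pow_left₀ h1 habsT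
  -- factor bounds for w₀
  have hfac : ∀ e : H₁.edgeSet, ε ^ 2 * q ^ 2 ≤ b (w₀ e) := by
    intro e
    simp only [hw₀_def]
    by_cases h : (e : Sym2 V₁) ∈ cw.edges
    · rw [if_pos h]; exact hbχ
    · rw [if_neg h, hbone]
      have hε2 : ε ^ 2 ≤ 1 := by nlinarith [hε0.le, hε1]
      calc ε ^ 2 * q ^ 2 ≤ 1 * q ^ 2 :=
            mul_le_mul_of_nonneg_right hε2 (sq_nonneg q)
        _ = q ^ 2 := one_mul _
  have htw₀ : ((ε ^ 2 * q ^ 2) ^ e₁) * (n : ℝ) ^ v₁ ≤ t w₀ := by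
    simp only [ht_def]
    rw [if_pos hΦ0]
    apply mul_le_mul_of_nonneg_right ?_ (pow_nonneg hn'.le _)
    calc (ε ^ 2 * q ^ 2) ^ e₁ = ∏ _e : H₁.edgeSet, (ε ^ 2 * q ^ 2) := by
          rw [Finset.prod_const, Finset.card_univ, ← he₁_def]
      _ ≤ ∏ e : H₁.edgeSet, b (w₀ e) :=
          Finset.prod_le_prod
            (fun _ _ => mul_nonneg (sq_nonneg ε) (sq_nonneg q)) (fun e _ => hfac e)
  have htw₁ : t (fun _ => (1 : AddChar G ℂ)) = (q ^ 2) ^ e₁ * (n : ℝ) ^ v₁ := by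
    simp only [ht_def]
    rw [if_pos hΦ1]
    simp only [hbone]
    rw [Finset.prod_const, Finset.card_univ, ← he₁_def]
  -- the two terms are distinct
  obtain ⟨s₀, hs₀⟩ := List.exists_mem_of_ne_nil cw.edges hedne
  have hne : (fun _ => (1 : AddChar G ℂ)) ≠ w₀ := by
    intro h
    apply hχ
    have h2 := congrFun h (⟨s₀, cw.edges_subset_edgeSet hs₀⟩ : H₁.edgeSet)
    simp only [hw₀_def] at h2
    rw [if_pos hs₀] at h2
    exact h2.symm
  have hge : t (fun _ => (1 : AddChar G ℂ)) + t w₀ ≤ ∑ w : H₁.edgeSet → AddChar G ℂ, t w := by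
    have h := Finset.sum_le_sum_of_subset_of_nonneg
      (Finset.subset_univ ({(fun _ => (1 : AddChar G ℂ)), w₀} :
        Finset (H₁.edgeSet → AddChar G ℂ)))
      (fun w _ _ => htnn w)
    rwa [Finset.sum_pair hne] at h
  -- final assembly
  have hcard2 : Nat.card (standardSubdivision H₁).edgeSet = 2 * e₁ := by
    rw [aux_card_subdivision_edgeSet, Nat.card_eq_fintype_card, he₁_def]
  have hα : Nat.card (V₁ ⊕ H₁.edgeSet) = v₁ + e₁ := by
    rw [Nat.card_eq_fintype_card, Fintype.card_sum, hv₁_def, he₁_def]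
  have hβ : Nat.card G = n := Nat.card_eq_fintype_card
  unfold homDensity
  rw [hcard2, hα, hβ, ← hcnt_def]
  rw [ge_iff_le, le_div_iff₀ (pow_pos hn' _)]
  rw [← mul_le_mul_iff_of_pos_right (pow_pos hn' e₁)]
  rw [hReal]
  have hfinal : (q / (n : ℝ)) ^ (2 * e₁) * (1 + ε ^ (2 * e₁)) * (n : ℝ) ^ (v₁ + e₁) * (n : ℝ) ^ e₁
      = (q ^ 2) ^ e₁ * (n : ℝ) ^ v₁ + (ε ^ 2 * q ^ 2) ^ e₁ * (n : ℝ) ^ v₁ := by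
    have hne0 : (n : ℝ) ≠ 0 := ne_of_gt hn'
    rw [div_pow]
    field_simp
    ring
  rw [hfinal]
  linarith [htw₀, hge, htw₁]
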